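/- Let P be a poset regarded as a category, let F : C ⥤ P be a functor from a small category, and let U ⊆ P be an upper set, with ι : C_U ⥤ C the inclusion of the full subcategory of objects X with F.obj X ∈ U. Then the left Kan extension functor (C_U ⥤ Type) ⥤ (C ⥤ Type) along ι is fully faithful, and a functor H : C ⥤ Type lies in its essential image if and only if H.obj c is empty for every object c of C with F.obj c ∉ U. -/

import Mathlib

open CategoryTheory

lemma aux_empty_costructured {C : Type} [SmallCategory C] {P : Type} [PartialOrder P]
    (F : C ⥤ P) (U : Set P) (hU : IsUpperSet U) (c : C) (hc : F.obj c ∉ U) :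
    IsEmpty (CostructuredArrow (ObjectProperty.ι (fun X : C => F.obj X ∈ U)) c) := by
  constructor
  intro X
  exact hc (hU (leOfHom (F.map X.hom)) X.left.property)

lemma aux_lan_empty {C : Type} [SmallCategory C] {P : Type} [PartialOrder P]
    (F : C ⥤ P) (U : Set P) (hU : IsUpperSet U)
    (G : ObjectProperty.FullSubcategory (fun X : C => F.obj X ∈ U) ⥤ Type)
    (c : C) (hc : F.obj c ∉ U) :
    IsEmpty (((ObjectProperty.ι (fun X : C => F.obj X ∈ U)).lan.obj G).obj c) := by
  have h := (Functor.isPointwiseLeftKanExtensionLeftKanExtensionUnit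
    (ObjectProperty.ι (fun X : C => F.obj X ∈ U)) G) c
  have he := aux_empty_costructured F U hU c hc
  let cone : Limits.Cocone (CostructuredArrow.proj (ObjectProperty.ι
      (fun X : C => F.obj X ∈ U)) c ⋙ G) :=
    { pt := PEmpty
      ι := { app := fun X => he.elim X, naturality := fun X => he.elim X } }
  exact Function.isEmpty (β := PEmpty) (h.desc cone)

/-- Let `F : C ⥤ P` be a functor from a small category to a poset and `U ⊆ P` an upper set.
The left Kan extension functor `(C_U ⥤ Type) ⥤ (C ⥤ Type)` along the full inclusion
`ι : C_U ⥤ C` is fully faithful, and `H : C ⥤ Type` lies in its essential image if and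
only if `H.obj c` is empty for every `c` with `F.obj c ∉ U`. -/
theorem lan_along_open_part_fullyFaithful_and_essImage
    {C : Type} [SmallCategory C] {P : Type} [PartialOrder P]
    (F : C ⥤ P) (U : Set P) (hU : IsUpperSet U) :
    ((ObjectProperty.ι (fun X : C => F.obj X ∈ U)).lan :
        (ObjectProperty.FullSubcategory (fun X : C => F.obj X ∈ U) ⥤ Type) ⥤ (C ⥤ Type)).Full ∧
    ((ObjectProperty.ι (fun X : C => F.obj X ∈ U)).lan :
        (ObjectProperty.FullSubcategory (fun X : C => F.obj X ∈ U) ⥤ Type) ⥤ (C ⥤ Type)).Faithful ∧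
    (∀ H : C ⥤ Type,
      ((ObjectProperty.ι (fun X : C => F.obj X ∈ U)).lan :
          (ObjectProperty.FullSubcategory (fun X : C => F.obj X ∈ U) ⥤ Type) ⥤ (C ⥤ Type)).essImage H ↔
        ∀ c : C, F.obj c ∉ U → IsEmpty (H.obj c)) := by
  set L := ObjectProperty.ι (fun X : C => F.obj X ∈ U) with hL
  have ff : L.lan.FullyFaithful := (L.lanAdjunction Type).fullyFaithfulLOfIsIsoUnit
  refine ⟨ff.full, ff.faithful, fun H => ?_⟩
  have := ff.full
  have := ff.faithful
  constructor
  · rintro ⟨G, ⟨e⟩⟩ c hc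
    exact (Iso.toEquiv (e.app c)).isEmpty_congr.mp (aux_lan_empty F U hU G c hc)
  · intro hH
    have key : ∀ c : C, IsIso (((L.lanAdjunction Type).counit.app H).app c) := by
      intro c
      by_cases hc : F.obj c ∈ U
      · have h1 : IsIso ((L.lanUnit.app (L ⋙ H)).app (⟨c, hc⟩ : ObjectProperty.FullSubcategory _)) :=
          inferInstance
        have h2 := L.lanUnit_app_app_lanAdjunction_counit_app_app (H := Type) H
          (⟨c, hc⟩ : ObjectProperty.FullSubcategory _)
        exact IsIso.of_isIso_fac_left h2
      · have e1 := aux_lan_empty F U hU (((Functor.whiskeringLeft _ _ Type).obj L).obj H) c hc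
        have e2 := hH c hc
        rw [CategoryTheory.isIso_iff_bijective]
        exact ⟨fun a => e1.elim a, fun b => e2.elim b⟩
    have : IsIso ((L.lanAdjunction Type).counit.app H) := NatIso.isIso_of_isIso_app _
    exact (L.lanAdjunction Type).mem_essImage_of_counit_isIso H
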